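/- For every n ≥ 1, every tuning parameter η_n > 0 and every δ with 0 < δ < 1: the equation Φ(n^{1/2}(a − η_n)) − Φ(n^{1/2}(−a − η_n)) = δ has a unique solution a_{n,S}* in [0, ∞), this solution is positive, the interval [θ̂_S − a_{n,S}*, θ̂_S + a_{n,S}*] has infimal coverage probability inf_{θ∈ℝ} P_{n,θ}(θ ∈ [θ̂_S − a_{n,S}*, θ̂_S + a_{n,S}*]) exactly equal to δ, and among all pairs (a, b) of nonnegative reals for which inf_{θ∈ℝ} P_{n,θ}(θ ∈ [θ̂_S − a, θ̂_S + b]) ≥ δ the length a + b is uniquely minimized at a = b = a_{n,S}*. -/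

import Mathlib

open MeasureTheory ProbabilityTheory Filter
open scoped NNReal
open scoped Topology ENNReal

/-- Standard normal cumulative distribution function Φ. -/
noncomputable def stdNormCDF (x : ℝ) : ℝ :=
  ((gaussianReal 0 1) (Set.Iic x)).toReal

/-- Soft-thresholding (LASSO) estimator with threshold η, as a function of ȳ. -/
noncomputable def softThresh (η y : ℝ) : ℝ := Real.sign y * max (|y| - η) 0

/-- Hard-thresholding estimator with threshold η, as a function of ȳ. -/
noncomputable def hardThresh (η y : ℝ) : ℝ := if η < |y| then y else 0

/-- Adaptive LASSO estimator with tuning parameter η, as a function of ȳ. -/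
noncomputable def adaLasso (η y : ℝ) : ℝ := if |y| ≤ η then 0 else y - η ^ 2 / y

/-- Coverage probability `P_{n,θ}(θ ∈ [est(ȳ) - a, est(ȳ) + b])` in the
known-variance case (σ = 1), where ȳ ~ N(θ, 1/n). -/
noncomputable def cover (n : ℕ) (est : ℝ → ℝ) (a b θ : ℝ) : ℝ :=
  ((gaussianReal θ ((n : ℝ≥0))⁻¹)
    {y : ℝ | est y - a ≤ θ ∧ θ ≤ est y + b}).toReal

lemma continuous_gaussPDF01 : Continuous (gaussianPDFReal 0 1) := by
  rw [gaussianPDFReal_def]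
  fun_prop

lemma phi_pos (x : ℝ) : 0 < gaussianPDFReal 0 1 x := gaussianPDFReal_pos _ _ _ one_ne_zero

lemma phi_lt_phi {u w : ℝ} (h : |u| < |w|) :
    gaussianPDFReal 0 1 w < gaussianPDFReal 0 1 u := by
  rw [gaussianPDFReal_def]
  simp only [NNReal.coe_one, mul_one, sub_zero]
  have habs : u ^ 2 < w ^ 2 := by nlinarith [abs_nonneg u, sq_abs u, sq_abs w]
  have hexp : Real.exp (-w ^ 2 / 2) < Real.exp (-u ^ 2 / 2) := by
    apply Real.exp_lt_exp.mpr; linarith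
  have hc : 0 < (Real.sqrt (2 * Real.pi))⁻¹ := by positivity
  exact mul_lt_mul_of_pos_left hexp hc

lemma stdNormCDF_eq_integral (x : ℝ) :
    stdNormCDF x = ∫ t in Set.Iic x, gaussianPDFReal 0 1 t := by
  rw [stdNormCDF, gaussianReal_apply_eq_integral 0 one_ne_zero,
    ENNReal.toReal_ofReal
      (setIntegral_nonneg measurableSet_Iic fun _ _ => gaussianPDFReal_nonneg _ _ _)]

lemma stdNormCDF_strictMono : StrictMono stdNormCDF := by
  intro x y hxy
  have hm : gaussianReal 0 1 (Set.Iic y)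
      = gaussianReal 0 1 (Set.Iic x) + gaussianReal 0 1 (Set.Ioc x y) := by
    rw [← measure_union (Set.Iic_disjoint_Ioc le_rfl) measurableSet_Ioc,
      Set.Iic_union_Ioc_eq_Iic hxy.le]
  have hpos : gaussianReal 0 1 (Set.Ioc x y) ≠ 0 := by
    intro h0
    have h1 : (volume : Measure ℝ) (Set.Ioc x y) = 0 :=
      gaussianReal_absolutelyContinuous' 0 one_ne_zero h0
    rw [Real.volume_Ioc] at h1
    rw [ENNReal.ofReal_eq_zero] at h1
    linarith
  unfold stdNormCDF
  rw [hm, ENNReal.toReal_add (measure_ne_top _ _) (measure_ne_top _ _)]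
  have := ENNReal.toReal_pos hpos (measure_ne_top _ _)
  linarith

lemma stdNormCDF_tendsto_one : Tendsto stdNormCDF atTop (𝓝 1) := by
  have h := tendsto_measure_Iic_atTop (gaussianReal 0 1)
  rw [measure_univ] at h
  have h2 : Tendsto (fun x => ((gaussianReal 0 1) (Set.Iic x)).toReal) atTop
      (𝓝 (1 : ℝ≥0∞).toReal) := (ENNReal.tendsto_toReal ENNReal.one_ne_top).comp h
  rw [ENNReal.toReal_one] at h2
  exact h2

lemma gauss_map_neg : (gaussianReal 0 1).map (fun z : ℝ => -z) = gaussianReal 0 1 := by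
  have h := gaussianReal_map_const_mul (μ := 0) (v := 1) (-1)
  have h2 : (NNReal.mk ((-1 : ℝ) ^ 2) (sq_nonneg _) * 1 : ℝ≥0) = 1 := by
    ext; norm_num
  rw [h2] at h
  simpa [neg_one_mul] using h

lemma stdNormCDF_neg (x : ℝ) : stdNormCDF (-x) = 1 - stdNormCDF x := by
  have hmap : gaussianReal 0 1 (Set.Iic (-x)) = gaussianReal 0 1 (Set.Ici x) := by
    conv_lhs => rw [← gauss_map_neg]
    rw [Measure.map_apply measurable_neg measurableSet_Iic]
    congr 1
    ext z
    simp [neg_le]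
  have hsing : gaussianReal 0 1 {x} = 0 :=
    gaussianReal_absolutelyContinuous 0 one_ne_zero (measure_singleton x)
  have hIci : gaussianReal 0 1 (Set.Ici x) = gaussianReal 0 1 (Set.Ioi x) :=
    (measure_congr (Ioi_ae_eq_Ici' hsing)).symm
  have hsplit : gaussianReal 0 1 (Set.Iic x) + gaussianReal 0 1 (Set.Ioi x) = 1 := by
    rw [← measure_union (Set.Iic_disjoint_Ioi le_rfl) measurableSet_Ioi,
      Set.Iic_union_Ioi, measure_univ]
  have h3 := congrArg ENNReal.toReal hsplit
  rw [ENNReal.toReal_add (measure_ne_top _ _) (measure_ne_top _ _), ENNReal.toReal_one] at h3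
  unfold stdNormCDF
  rw [hmap, hIci]
  linarith

lemma stdNormCDF_tendsto_zero : Tendsto stdNormCDF atBot (𝓝 0) := by
  have h1 : Tendsto (fun x : ℝ => -x) atBot atTop := tendsto_neg_atBot_atTop
  have h2 := stdNormCDF_tendsto_one.comp h1
  have h3 : Tendsto (fun x : ℝ => 1 - stdNormCDF (-x)) atBot (𝓝 (1 - 1)) :=
    tendsto_const_nhds.sub h2
  norm_num at h3
  refine h3.congr fun x => ?_
  rw [stdNormCDF_neg]
  ring

lemma hasDerivAt_stdNormCDF (x : ℝ) :
    HasDerivAt stdNormCDF (gaussianPDFReal 0 1 x) x := by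
  have hint : ∀ a b : ℝ, IntervalIntegrable (gaussianPDFReal 0 1) volume a b :=
    fun a b => (integrable_gaussianPDFReal 0 1).intervalIntegrable
  have hder : HasDerivAt (fun u => ∫ t in (0:ℝ)..u, gaussianPDFReal 0 1 t)
      (gaussianPDFReal 0 1 x) x :=
    intervalIntegral.integral_hasDerivAt_right (hint 0 x)
      (continuous_gaussPDF01.aestronglyMeasurable.stronglyMeasurableAtFilter)
      continuous_gaussPDF01.continuousAt
  have heq : ∀ u : ℝ, stdNormCDF u = stdNormCDF 0 + ∫ t in (0:ℝ)..u, gaussianPDFReal 0 1 t := by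
    intro u
    have hIOn : ∀ s : Set ℝ, IntegrableOn (gaussianPDFReal 0 1) s volume :=
      fun s => (integrable_gaussianPDFReal 0 1).integrableOn
    rcases le_or_gt 0 u with h | h
    · rw [intervalIntegral.integral_of_le h, stdNormCDF_eq_integral, stdNormCDF_eq_integral]
      rw [← setIntegral_union (Set.Iic_disjoint_Ioc le_rfl) measurableSet_Ioc (hIOn _) (hIOn _),
        Set.Iic_union_Ioc_eq_Iic h]
    · rw [intervalIntegral.integral_symm, intervalIntegral.integral_of_le h.le,
        stdNormCDF_eq_integral, stdNormCDF_eq_integral]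
      have := setIntegral_union (μ := volume) (f := gaussianPDFReal 0 1)
        (Set.Iic_disjoint_Ioc le_rfl) measurableSet_Ioc (hIOn (Set.Iic u)) (hIOn (Set.Ioc u 0))
      rw [Set.Iic_union_Ioc_eq_Iic h.le] at this
      rw [this]
      ring
  have hfun : stdNormCDF = fun u => stdNormCDF 0 + ∫ t in (0:ℝ)..u, gaussianPDFReal 0 1 t :=
    funext heq
  rw [hfun]
  exact hder.const_add _

lemma continuous_stdNormCDF : Continuous stdNormCDF :=
  continuous_iff_continuousAt.mpr fun x => (hasDerivAt_stdNormCDF x).continuousAt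

lemma gauss_var_inv_eq_map (n : ℕ) (hn : 1 ≤ n) (θ : ℝ) :
    gaussianReal θ ((n : ℝ≥0))⁻¹ =
      (gaussianReal 0 1).map (fun z => (Real.sqrt n)⁻¹ * z + θ) := by
  have hn0 : (0:ℝ) < n := by exact_mod_cast hn
  have hr : (0:ℝ) < Real.sqrt n := Real.sqrt_pos.mpr hn0
  have h1 : (gaussianReal 0 1).map (fun z => (Real.sqrt n)⁻¹ * z)
      = gaussianReal 0 ((n : ℝ≥0))⁻¹ := by
    have h := gaussianReal_map_const_mul (μ := 0) (v := 1) ((Real.sqrt n)⁻¹)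
    rw [mul_zero] at h
    have h2 : (NNReal.mk (((Real.sqrt n)⁻¹) ^ 2) (sq_nonneg _) * 1 : ℝ≥0) = ((n : ℝ≥0))⁻¹ := by
      ext
      push_cast
      rw [mul_one, inv_pow, Real.sq_sqrt hn0.le]
    rw [h2] at h
    exact h
  calc gaussianReal θ ((n : ℝ≥0))⁻¹
      = (gaussianReal 0 ((n : ℝ≥0))⁻¹).map (· + θ) := by
        rw [gaussianReal_map_add_const θ, zero_add]
    _ = ((gaussianReal 0 1).map (fun z => (Real.sqrt n)⁻¹ * z)).map (· + θ) := by rw [h1]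
    _ = (gaussianReal 0 1).map (fun z => (Real.sqrt n)⁻¹ * z + θ) := by
        rw [Measure.map_map (measurable_id'.add_const θ) (measurable_const_mul _)]
        rfl

lemma gauss_Iic (n : ℕ) (hn : 1 ≤ n) (θ x : ℝ) :
    ((gaussianReal θ ((n : ℝ≥0))⁻¹) (Set.Iic x)).toReal
      = stdNormCDF (Real.sqrt n * (x - θ)) := by
  have hn0 : (0:ℝ) < n := by exact_mod_cast hn
  have hr : (0:ℝ) < Real.sqrt n := Real.sqrt_pos.mpr hn0
  have hrr : Real.sqrt n * (Real.sqrt n)⁻¹ = 1 := mul_inv_cancel₀ hr.ne'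
  rw [gauss_var_inv_eq_map n hn θ,
    Measure.map_apply (by fun_prop) measurableSet_Iic]
  have hpre : (fun z => (Real.sqrt n)⁻¹ * z + θ) ⁻¹' (Set.Iic x)
      = Set.Iic (Real.sqrt n * (x - θ)) := by
    ext z
    simp only [Set.mem_preimage, Set.mem_Iic]
    constructor
    · intro h
      calc z = (Real.sqrt n * (Real.sqrt n)⁻¹) * z := by rw [hrr]; ring
        _ = Real.sqrt n * ((Real.sqrt n)⁻¹ * z) := by ring
        _ ≤ Real.sqrt n * (x - θ) :=
            mul_le_mul_of_nonneg_left (by linarith) hr.le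
    · intro h
      have h2 : (Real.sqrt n)⁻¹ * z ≤ (Real.sqrt n)⁻¹ * (Real.sqrt n * (x - θ)) :=
        mul_le_mul_of_nonneg_left h (inv_nonneg.mpr hr.le)
      rw [← mul_assoc, inv_mul_cancel₀ hr.ne', one_mul] at h2
      linarith
  rw [hpre]
  rfl

lemma gauss_Icc (n : ℕ) (hn : 1 ≤ n) (θ : ℝ) {L U : ℝ} (hLU : L ≤ U) :
    ((gaussianReal θ ((n : ℝ≥0))⁻¹) (Set.Icc L U)).toReal
      = stdNormCDF (Real.sqrt n * (U - θ)) - stdNormCDF (Real.sqrt n * (L - θ)) := by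
  have hv : ((n : ℝ≥0))⁻¹ ≠ 0 := by
    apply inv_ne_zero
    exact Nat.cast_ne_zero.mpr (by omega)
  have hsing : gaussianReal θ ((n : ℝ≥0))⁻¹ {L} = 0 :=
    gaussianReal_absolutelyContinuous θ hv (measure_singleton L)
  have hIcc : gaussianReal θ ((n : ℝ≥0))⁻¹ (Set.Icc L U)
      = gaussianReal θ ((n : ℝ≥0))⁻¹ (Set.Ioc L U) :=
    (measure_congr (Ioc_ae_eq_Icc' hsing)).symm
  have hadd : gaussianReal θ ((n : ℝ≥0))⁻¹ (Set.Iic L)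
      + gaussianReal θ ((n : ℝ≥0))⁻¹ (Set.Ioc L U)
      = gaussianReal θ ((n : ℝ≥0))⁻¹ (Set.Iic U) := by
    rw [← measure_union (Set.Iic_disjoint_Ioc le_rfl) measurableSet_Ioc,
      Set.Iic_union_Ioc_eq_Iic hLU]
  have h2 := congrArg ENNReal.toReal hadd
  rw [ENNReal.toReal_add (measure_ne_top _ _) (measure_ne_top _ _)] at h2
  rw [gauss_Iic n hn θ U, gauss_Iic n hn θ L] at h2
  rw [hIcc]
  linarith

lemma softThresh_eq {η : ℝ} (hη : 0 < η) (y : ℝ) :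
    softThresh η y = if y < -η then y + η else if y ≤ η then 0 else y - η := by
  unfold softThresh
  rcases lt_trichotomy y 0 with hy | hy | hy
  · rw [Real.sign_of_neg hy, abs_of_neg hy]
    rcases lt_or_ge y (-η) with h | h
    · rw [if_pos h, max_eq_left (by linarith)]; ring
    · rw [if_neg (not_lt.mpr h), if_pos (by linarith), max_eq_right (by linarith), mul_zero]
  · subst hy
    rw [Real.sign_zero, zero_mul, if_neg (by linarith), if_pos hη.le]
  · rw [Real.sign_of_pos hy, abs_of_pos hy, one_mul]
    rcases le_or_gt y η with h | h
    · rw [if_neg (by linarith), if_pos h, max_eq_right (by linarith)]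
    · rw [if_neg (by linarith), if_neg (not_le.mpr h), max_eq_left (by linarith)]

lemma softThresh_le_iff {η : ℝ} (hη : 0 < η) (y c : ℝ) :
    softThresh η y ≤ c ↔ y ≤ (if 0 ≤ c then c + η else c - η) := by
  rw [softThresh_eq hη]
  split_ifs with h1 h2 h3 h3 h4 <;> constructor <;> intro h <;> linarith

lemma le_softThresh_iff {η : ℝ} (hη : 0 < η) (y c : ℝ) :
    c ≤ softThresh η y ↔ (if 0 < c then c + η else c - η) ≤ y := by
  rw [softThresh_eq hη]
  split_ifs with h1 h2 h3 h3 h4 <;> constructor <;> intro h <;> linarith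

lemma cover_softThresh_eq (n : ℕ) (hn : 1 ≤ n) {η : ℝ} (hη : 0 < η)
    {a b : ℝ} (ha : 0 ≤ a) (hb : 0 ≤ b) (θ : ℝ) :
    cover n (softThresh η) a b θ =
      stdNormCDF (Real.sqrt n * (if 0 ≤ θ + a then a + η else a - η))
        - stdNormCDF (Real.sqrt n * (if 0 < θ - b then -b + η else -b - η)) := by
  set L := if 0 < θ - b then θ - b + η else θ - b - η with hL
  set U := if 0 ≤ θ + a then θ + a + η else θ + a - η with hU
  have hset : {y : ℝ | softThresh η y - a ≤ θ ∧ θ ≤ softThresh η y + b} = Set.Icc L U := by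
    ext y
    simp only [Set.mem_setOf_eq, Set.mem_Icc]
    have e1 : softThresh η y - a ≤ θ ↔ y ≤ U := by
      rw [sub_le_iff_le_add, add_comm θ a]
      rw [softThresh_le_iff hη y (a + θ), hU]
      constructor <;> intro h <;> [skip; skip] <;>
        · split_ifs at h ⊢ with h' h'' <;> first | linarith | (exfalso; linarith)
    have e2 : θ ≤ softThresh η y + b ↔ L ≤ y := by
      rw [← sub_le_iff_le_add, le_softThresh_iff hη y (θ - b), hL]
    rw [e1, e2, and_comm]
  have hLU : L ≤ U := by
    rw [hL, hU]; split_ifs <;> linarith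
  rw [cover, hset, gauss_Icc n hn θ hLU]
  have hU2 : U - θ = if 0 ≤ θ + a then a + η else a - η := by
    rw [hU]; split_ifs <;> ring
  have hL2 : L - θ = if 0 < θ - b then -b + η else -b - η := by
    rw [hL]; split_ifs <;> ring
  rw [hU2, hL2]

lemma iInf_cover_softThresh (n : ℕ) (hn : 1 ≤ n) {η : ℝ} (hη : 0 < η)
    {a b : ℝ} (ha : 0 ≤ a) (hb : 0 ≤ b) :
    (⨅ θ : ℝ, cover n (softThresh η) a b θ)
      = min (stdNormCDF (Real.sqrt n * (a - η)) - stdNormCDF (Real.sqrt n * (-b - η)))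
            (stdNormCDF (Real.sqrt n * (a + η)) - stdNormCDF (Real.sqrt n * (-b + η))) := by
  have hr : (0:ℝ) ≤ Real.sqrt n := Real.sqrt_nonneg _
  have hbdd : BddBelow (Set.range fun θ => cover n (softThresh η) a b θ) := by
    refine ⟨0, ?_⟩
    rintro x ⟨θ, rfl⟩
    exact ENNReal.toReal_nonneg
  apply le_antisymm
  · apply le_min
    · have h := ciInf_le hbdd (-a - 1)
      rwa [cover_softThresh_eq n hn hη ha hb, if_neg (by intro h'; linarith),
        if_neg (by intro h'; linarith)] at h
    · have h := ciInf_le hbdd (b + 1)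
      rwa [cover_softThresh_eq n hn hη ha hb, if_pos (by linarith),
        if_pos (by linarith)] at h
  · apply le_ciInf
    intro θ
    rw [cover_softThresh_eq n hn hη ha hb]
    split_ifs with h1 h2
    · exact min_le_right _ _
    · refine le_trans (min_le_left _ _) ?_
      have : stdNormCDF (Real.sqrt n * (a - η)) ≤ stdNormCDF (Real.sqrt n * (a + η)) :=
        stdNormCDF_strictMono.monotone (mul_le_mul_of_nonneg_left (by linarith) hr)
      linarith
    · exfalso
      rw [not_le] at h1
      linarith
    · exact min_le_left _ _


/-- Theorem 1(a): the shortest δ-level interval based on the soft-thresholding estimator. -/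
theorem stmt_6 (n : ℕ) (hn : 1 ≤ n) (η : ℝ) (hη : 0 < η) (δ : ℝ) (hδ0 : 0 < δ)
    (hδ1 : δ < 1) :
    ∃ astar : ℝ, 0 ≤ astar ∧
      -- `astar` solves the equation
      stdNormCDF (Real.sqrt n * (astar - η)) - stdNormCDF (Real.sqrt n * (-astar - η)) = δ ∧
      -- and it is the unique nonnegative solution
      (∀ a : ℝ, 0 ≤ a →
        stdNormCDF (Real.sqrt n * (a - η)) - stdNormCDF (Real.sqrt n * (-a - η)) = δ →
        a = astar) ∧
      -- it is positive
      0 < astar ∧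
      -- the corresponding symmetric interval has infimal coverage probability exactly δ
      (⨅ θ : ℝ, cover n (softThresh η) astar astar θ) = δ ∧
      -- among all intervals with infimal coverage probability ≥ δ,
      -- the length is minimized at (astar, astar) ...
      (∀ a b : ℝ, 0 ≤ a → 0 ≤ b →
        δ ≤ (⨅ θ : ℝ, cover n (softThresh η) a b θ) →
        astar + astar ≤ a + b) ∧
      -- ... and uniquely so
      (∀ a b : ℝ, 0 ≤ a → 0 ≤ b →
        δ ≤ (⨅ θ : ℝ, cover n (softThresh η) a b θ) →
        a + b = astar + astar → a = astar ∧ b = astar) := by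
  have hn0 : (0:ℝ) < n := by exact_mod_cast hn
  have hr : (0:ℝ) < Real.sqrt n := Real.sqrt_pos.mpr hn0
  set f : ℝ → ℝ :=
    fun x => stdNormCDF (Real.sqrt n * (x - η)) - stdNormCDF (Real.sqrt n * (-x - η)) with hf
  have hfmono : StrictMono f := by
    intro x y hxy
    have h1 : stdNormCDF (Real.sqrt n * (x - η)) < stdNormCDF (Real.sqrt n * (y - η)) :=
      stdNormCDF_strictMono (by nlinarith)
    have h2 : stdNormCDF (Real.sqrt n * (-y - η)) < stdNormCDF (Real.sqrt n * (-x - η)) :=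
      stdNormCDF_strictMono (by nlinarith)
    simp only [hf]
    linarith
  have hf0 : f 0 = 0 := by simp [hf]
  have hfcont : Continuous f := by
    apply Continuous.sub <;> exact continuous_stdNormCDF.comp (by fun_prop)
  have htop : Tendsto f atTop (𝓝 1) := by
    have l1 : Tendsto (fun x : ℝ => Real.sqrt n * (x - η)) atTop atTop := by
      apply Tendsto.const_mul_atTop hr
      simpa [sub_eq_add_neg] using tendsto_atTop_add_const_right atTop (-η) tendsto_id
    have l2 : Tendsto (fun x : ℝ => Real.sqrt n * (-x - η)) atTop atBot := by
      apply Tendsto.const_mul_atBot hr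
      simpa [sub_eq_add_neg] using
        tendsto_atBot_add_const_right atTop (-η) tendsto_neg_atTop_atBot
    have h := (stdNormCDF_tendsto_one.comp l1).sub (stdNormCDF_tendsto_zero.comp l2)
    norm_num at h
    exact h
  obtain ⟨M, hMδ, hM0⟩ : ∃ M : ℝ, δ < f M ∧ 0 ≤ M :=
    ((htop.eventually (eventually_gt_nhds hδ1)).and (eventually_ge_atTop 0)).exists
  obtain ⟨astar, hmem, hastar⟩ : ∃ x ∈ Set.Icc (0:ℝ) M, f x = δ := by
    have hsub := intermediate_value_Icc hM0 hfcont.continuousOn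
    have hδmem : δ ∈ Set.Icc (f 0) (f M) := ⟨by rw [hf0]; exact hδ0.le, hMδ.le⟩
    exact hsub hδmem
  have ha0 : 0 ≤ astar := hmem.1
  have hapos : 0 < astar := by
    rcases ha0.lt_or_eq with h | h
    · exact h
    · exfalso; rw [← h] at hastar; rw [hf0] at hastar; linarith
  have huniq : ∀ a : ℝ, 0 ≤ a → f a = δ → a = astar := fun a _ h =>
    hfmono.injective (h.trans hastar.symm)
  -- symmetry helpers
  have hneg : ∀ z : ℝ, stdNormCDF (Real.sqrt n * (-z - η))
      = 1 - stdNormCDF (Real.sqrt n * (z + η)) := fun z => by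
    rw [show Real.sqrt n * (-z - η) = -(Real.sqrt n * (z + η)) by ring, stdNormCDF_neg]
  have hneg2 : ∀ z : ℝ, stdNormCDF (Real.sqrt n * (-z + η))
      = 1 - stdNormCDF (Real.sqrt n * (z - η)) := fun z => by
    rw [show Real.sqrt n * (-z + η) = -(Real.sqrt n * (z - η)) by ring, stdNormCDF_neg]
  -- key strict monotonicity
  have hH : ∀ x : ℝ, 0 ≤ x → x < astar →
      stdNormCDF (Real.sqrt n * (x - η)) + stdNormCDF (Real.sqrt n * (2 * astar - x + η))
        < stdNormCDF (Real.sqrt n * (astar - η)) + stdNormCDF (Real.sqrt n * (astar + η)) := by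
    intro x hx hxc
    set H : ℝ → ℝ := fun y => stdNormCDF (Real.sqrt n * (y - η))
        + stdNormCDF (Real.sqrt n * (2 * astar - y + η)) with hHdef
    have hder : ∀ y : ℝ, HasDerivAt H
        (gaussianPDFReal 0 1 (Real.sqrt n * (y - η)) * Real.sqrt n
          + gaussianPDFReal 0 1 (Real.sqrt n * (2 * astar - y + η)) * (-(Real.sqrt n))) y := by
      intro y
      have h1 : HasDerivAt (fun y : ℝ => Real.sqrt n * (y - η)) (Real.sqrt n) y := by
        simpa using ((hasDerivAt_id y).sub_const η).const_mul (Real.sqrt n)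
      have h2 : HasDerivAt (fun y : ℝ => Real.sqrt n * (2 * astar - y + η))
          (-(Real.sqrt n)) y := by
        have h3 : HasDerivAt (fun y : ℝ => 2 * astar - y + η) (-1) y := by
          simpa using ((hasDerivAt_id y).const_sub (2 * astar)).add_const η
        simpa using h3.const_mul (Real.sqrt n)
      exact ((hasDerivAt_stdNormCDF _).comp y h1).add ((hasDerivAt_stdNormCDF _).comp y h2)
    have hsm : StrictMonoOn H (Set.Icc 0 astar) := by
      apply strictMonoOn_of_deriv_pos (convex_Icc 0 astar)
      · apply Continuous.continuousOn
        apply Continuous.add <;> exact continuous_stdNormCDF.comp (by fun_prop)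
      · intro y hy
        rw [interior_Icc] at hy
        rw [(hder y).deriv]
        have hlt : gaussianPDFReal 0 1 (Real.sqrt n * (2 * astar - y + η))
            < gaussianPDFReal 0 1 (Real.sqrt n * (y - η)) := by
          apply phi_lt_phi
          have h2c : (0:ℝ) < 2 * astar - y + η := by
            have := hy.2; linarith
          rw [abs_mul, abs_mul, abs_of_pos hr, abs_of_pos h2c]
          apply mul_lt_mul_of_pos_left _ hr
          rw [abs_lt]
          constructor <;> [linarith [hy.1, hy.2]; linarith [hy.2]]
        nlinarith [mul_pos hr (sub_pos.mpr hlt)]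
    have h := hsm (Set.mem_Icc.mpr ⟨hx, hxc.le⟩) (Set.mem_Icc.mpr ⟨ha0, le_rfl⟩) hxc
    simp only [hHdef] at h
    rwa [show 2 * astar - astar + η = astar + η by ring] at h
  -- claim A
  have claimA : ∀ a b : ℝ, 0 ≤ a → 0 ≤ b →
      δ ≤ stdNormCDF (Real.sqrt n * (a - η)) - stdNormCDF (Real.sqrt n * (-b - η)) →
      a < astar → astar + astar < a + b := by
    intro a b ha hb hcon halt
    by_contra hcon2
    push_neg at hcon2
    have ht : stdNormCDF (Real.sqrt n * (b + η))
        ≤ stdNormCDF (Real.sqrt n * (2 * astar - a + η)) :=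
      stdNormCDF_strictMono.monotone (mul_le_mul_of_nonneg_left (by linarith) hr.le)
    have hHlt := hH a ha halt
    have hnb := hneg b
    have hna := hneg astar
    simp only [hf] at hastar
    linarith
  refine ⟨astar, ha0, hastar, fun a h1 h2 => huniq a h1 h2, hapos, ?_, ?_, ?_⟩
  · rw [iInf_cover_softThresh n hn hη ha0 ha0]
    have e1 : stdNormCDF (Real.sqrt n * (astar - η))
        - stdNormCDF (Real.sqrt n * (-astar - η)) = δ := hastar
    have e3 : stdNormCDF (Real.sqrt n * (astar + η))
        - stdNormCDF (Real.sqrt n * (-astar + η)) = δ := by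
      have := hneg astar; have := hneg2 astar; linarith
    rw [e1, e3, min_self]
  · intro a b ha hb hcov
    rw [iInf_cover_softThresh n hn hη ha hb, le_min_iff] at hcov
    obtain ⟨hc1, hc3⟩ := hcov
    rcases lt_or_ge a astar with h | h
    · exact (claimA a b ha hb hc1 h).le
    rcases lt_or_ge b astar with h' | h'
    · have e : stdNormCDF (Real.sqrt n * (b - η)) - stdNormCDF (Real.sqrt n * (-a - η))
          = stdNormCDF (Real.sqrt n * (a + η)) - stdNormCDF (Real.sqrt n * (-b + η)) := by
        have := hneg a; have := hneg2 b; linarith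
      have := claimA b a hb ha (by rw [e]; exact hc3) h'
      linarith
    · linarith
  · intro a b ha hb hcov hsum
    rw [iInf_cover_softThresh n hn hη ha hb, le_min_iff] at hcov
    obtain ⟨hc1, hc3⟩ := hcov
    rcases lt_or_ge a astar with h | h
    · have := claimA a b ha hb hc1 h
      linarith
    rcases lt_or_ge b astar with h' | h'
    · have e : stdNormCDF (Real.sqrt n * (b - η)) - stdNormCDF (Real.sqrt n * (-a - η))
          = stdNormCDF (Real.sqrt n * (a + η)) - stdNormCDF (Real.sqrt n * (-b + η)) := by
        have := hneg a; have := hneg2 b; linarith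
      have := claimA b a hb ha (by rw [e]; exact hc3) h'
      exfalso; linarith
    · constructor <;> linarith
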